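/- arXiv:1711.08104 — 3 statements merged into one kernel-verified Lean document; each statement's English description precedes it below -/
import Mathlib

section
/- If u, v ∈ L²(𝕋¹) have Fourier coefficients satisfying |k|^p|û_k| ≤ 𝔲 and |k|^q|v̂_k| ≤ 𝔳 for all k ≠ 0 (with |û_0| ≤ 𝔲, |v̂_0| ≤ 𝔳), where 1 ≤ q < p are exponents, then the product w = uv satisfies |k|^q|ŵ_k| ≤ C_{p,q}·𝔲·𝔳 for all k ≠ 0, with C_{p,q} a constant depending only on p and q. -/
open MeasureTheory Real

/-- Fourier coefficient of a `2π`-periodic function on the torus `[-π,π]`. -/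
noncomputable def fc (f : ℝ → ℂ) (k : ℤ) : ℂ :=
  (1 / (2 * π)) * ∫ x in (-π)..π, f x * Complex.exp (-Complex.I * k * x)

instance fact_two_pi_pos : Fact (0 < 2 * π) := ⟨by positivity⟩

lemma neg_pi_add_two_pi : -π + 2 * π = π := by ring

lemma fc_eq_fourierCoeff (f : ℝ → ℂ) (k : ℤ) :
    fc f k = fourierCoeff (AddCircle.liftIoc (2 * π) (-π) f) k := by
  rw [fourierCoeff_eq_intervalIntegral _ k (-π), neg_pi_add_two_pi, fc, Complex.real_smul]
  have hle : -π ≤ π := by linarith [pi_pos]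
  congr 1
  · push_cast; ring
  · rw [intervalIntegral.integral_of_le hle, intervalIntegral.integral_of_le hle]
    refine setIntegral_congr_fun measurableSet_Ioc fun x hx => ?_
    have hx' : x ∈ Set.Ioc (-π) (-π + 2 * π) := by rwa [neg_pi_add_two_pi]
    rw [smul_eq_mul, AddCircle.liftIoc_coe_apply hx', fourier_coe_apply, mul_comm]
    congr 1
    have hπ : (π : ℂ) ≠ 0 := Complex.ofReal_ne_zero.mpr pi_ne_zero
    congr 1
    push_cast
    field_simp

lemma liftIoc_measurable {f : ℝ → ℂ} (hf : Measurable f) :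
    Measurable (AddCircle.liftIoc (2 * π) (-π) f) := by
  have : AddCircle.liftIoc (2 * π) (-π) f =
      f ∘ Subtype.val ∘ (AddCircle.measurableEquivIoc (2 * π) (-π)) := rfl
  rw [this]
  exact hf.comp (measurable_subtype_coe.comp
    (AddCircle.measurableEquivIoc (2 * π) (-π)).measurable)

lemma memLp_liftIoc {f : ℝ → ℂ} (hfm : Measurable f)
    (hf : MemLp f 2 (volume.restrict (Set.Ioc (-π) π))) :
    MemLp (AddCircle.liftIoc (2 * π) (-π) f) 2 (@AddCircle.haarAddCircle (2 * π) _) := by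
  have hmeas := liftIoc_measurable hfm
  have h1 : MemLp (AddCircle.liftIoc (2 * π) (-π) f) 2
      (volume : Measure (AddCircle (2 * π))) := by
    rw [← (AddCircle.measurePreserving_mk (2 * π) (-π)).map_eq]
    rw [memLp_map_measure_iff hmeas.aestronglyMeasurable
      AddCircle.measurable_mk'.aemeasurable]
    have hIoc : Set.Ioc (-π) (-π + 2 * π) = Set.Ioc (-π) π := by rw [neg_pi_add_two_pi]
    have hae : f =ᵐ[volume.restrict (Set.Ioc (-π) (-π + 2 * π))]
        (AddCircle.liftIoc (2 * π) (-π) f) ∘ ((↑) : ℝ → AddCircle (2 * π)) := by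
      refine (ae_restrict_iff' measurableSet_Ioc).mpr (ae_of_all _ fun x hx => ?_)
      simp only [Function.comp_apply]
      rw [AddCircle.liftIoc_coe_apply hx]
    refine MemLp.ae_eq hae ?_
    rw [hIoc]
    exact hf
  have h3 : (@AddCircle.haarAddCircle (2 * π) _ : Measure (AddCircle (2 * π)))
      = (ENNReal.ofReal (2 * π))⁻¹ • (volume : Measure (AddCircle (2 * π))) := by
    rw [AddCircle.volume_eq_smul_haarAddCircle, smul_smul, ENNReal.inv_mul_cancel
      (by simp [ENNReal.ofReal_eq_zero, not_le]; exact pi_pos) ENNReal.ofReal_ne_top, one_smul]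
  rw [h3]
  exact h1.smul_measure (by simp [pi_pos])

section conv

variable {T : ℝ} [hT : Fact (0 < T)]

open AddCircle in
lemma fourierCoeff_mul (U V : AddCircle T → ℂ)
    (hU : MemLp U 2 haarAddCircle) (hV : MemLp V 2 haarAddCircle) (k : ℤ) :
    fourierCoeff (fun t => U t * V t) k
      = ∑' j : ℤ, fourierCoeff U (k - j) * fourierCoeff V j := by
  set F0 : AddCircle T → ℂ := fun t => starRingEnd ℂ (fourier (-k) t * U t) with hF0def
  have hF0m : AEStronglyMeasurable F0 haarAddCircle :=
    Complex.continuous_conj.comp_aestronglyMeasurable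
      ((map_continuous (fourier (-k))).aestronglyMeasurable.mul hU.1)
  have hF0 : MemLp F0 2 haarAddCircle := by
    refine MemLp.of_le hU hF0m (ae_of_all _ fun t => ?_)
    simp [F0, norm_mul, Circle.norm_coe]
  set F : Lp ℂ 2 (@haarAddCircle T hT) := hF0.toLp F0 with hFdef
  set G : Lp ℂ 2 (@haarAddCircle T hT) := hV.toLp V with hGdef
  have hinner : (inner ℂ F G : ℂ) = fourierCoeff (fun t => U t * V t) k := by
    rw [MeasureTheory.L2.inner_def, fourierCoeff]
    refine integral_congr_ae ?_
    filter_upwards [hF0.coeFn_toLp, hV.coeFn_toLp] with t h1 h2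
    rw [hFdef, hGdef] at *
    rw [h1, h2]
    simp only [RCLike.inner_apply, hF0def, RingHomCompTriple.comp_apply,
      RingHom.id_apply, smul_eq_mul]
    ring
  have hFc : ∀ j : ℤ, fourierCoeff (F : AddCircle T → ℂ) j = fourierCoeff F0 j := fun j =>
    integral_congr_ae (by filter_upwards [hF0.coeFn_toLp] with t h; rw [h])
  have hGc : ∀ j : ℤ, fourierCoeff (G : AddCircle T → ℂ) j = fourierCoeff V j := fun j =>
    integral_congr_ae (by filter_upwards [hV.coeFn_toLp] with t h; rw [h])
  calc fourierCoeff (fun t => U t * V t) k = (inner ℂ F G : ℂ) := hinner.symm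
    _ = (inner ℂ (fourierBasis.repr F) (fourierBasis.repr G) : ℂ) :=
        (fourierBasis.repr.inner_map_map F G).symm
    _ = ∑' j : ℤ, starRingEnd ℂ (fourierBasis.repr F j) * fourierBasis.repr G j := by
        rw [lp.inner_eq_tsum]; simp only [RCLike.inner_apply']
    _ = ∑' j : ℤ, fourierCoeff U (k - j) * fourierCoeff V j := by
        congr 1
        funext j
        rw [fourierBasis_repr, fourierBasis_repr, hFc j, hGc j]
        have h3 : fourierCoeff F0 j = starRingEnd ℂ (fourierCoeff U (k - j)) := by
          rw [fourierCoeff, fourierCoeff, ← integral_conj]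
          refine integral_congr_ae (ae_of_all _ fun t => ?_)
          simp only [smul_eq_mul, F0, map_mul]
          have e1 : starRingEnd ℂ (fourier (-k) t) = fourier k t := by
            rw [← fourier_neg, neg_neg]
          have e3 : starRingEnd ℂ (fourier (-(k - j)) t) = fourier (k - j) t := by
            rw [← fourier_neg, neg_neg]
          have e2 : fourier (-j) t * fourier k t = fourier (k - j) t := by
            rw [← fourier_add, show (-j + k : ℤ) = k - j by ring]
          rw [e1, e3, ← mul_assoc, e2]
        rw [h3, RCLike.conj_conj]

end conv

lemma fact2 {K : ℝ} (hK : 0 < K) (q : ℝ) (hq : 0 ≤ q) {x : ℝ} (hx : K / 2 ≤ x) :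
    K ^ q * x ^ (-q) ≤ 2 ^ q := by
  have hx0 : 0 < x := lt_of_lt_of_le (by positivity) hx
  have h1 : x ^ (-q) ≤ (K / 2) ^ (-q) :=
    Real.rpow_le_rpow_of_nonpos (by positivity) hx (by linarith)
  have h2 : K / (K / 2) = 2 := by field_simp
  calc K ^ q * x ^ (-q) ≤ K ^ q * (K / 2) ^ (-q) := by
        exact mul_le_mul_of_nonneg_left h1 (Real.rpow_nonneg hK.le q)
    _ = 2 ^ q := by
        rw [Real.rpow_neg (by positivity), mul_comm, inv_mul_eq_div,
          ← Real.div_rpow hK.le (by positivity), h2]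

lemma key_pointwise (p q : ℝ) (hq : 1 ≤ q) (hpq : q < p) (𝔲 𝔳 : ℝ) (h𝔲 : 0 ≤ 𝔲) (h𝔳 : 0 ≤ 𝔳)
    (a b : ℤ → ℝ) (ha : ∀ i, 0 ≤ a i) (hb : ∀ i, 0 ≤ b i)
    (haw : ∀ i, a i ≤ 𝔲 * (max 1 |(i : ℝ)|) ^ (-p))
    (hbw : ∀ i, b i ≤ 𝔳 * (max 1 |(i : ℝ)|) ^ (-q))
    (k j : ℤ) (hk : k ≠ 0) :
    |(k : ℝ)| ^ q * (a (k - j) * b j) ≤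
      2 ^ q * 𝔲 * 𝔳 * ((max 1 |((k - j : ℤ) : ℝ)|) ^ (-p) + (max 1 |(j : ℝ)|) ^ (-p)) := by
  have hq0 : 0 ≤ q := by linarith
  have hK1 : (1 : ℝ) ≤ |(k : ℝ)| := by exact_mod_cast Int.one_le_abs hk
  have hK0 : (0 : ℝ) < |(k : ℝ)| := by linarith
  have hM1 : ∀ i : ℤ, (1 : ℝ) ≤ max 1 |(i : ℝ)| := fun i => le_max_left _ _
  have hM0 : ∀ i : ℤ, (0 : ℝ) < max 1 |(i : ℝ)| := fun i => lt_of_lt_of_le one_pos (hM1 i)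
  have hsum : (k : ℝ) = ((k - j : ℤ) : ℝ) + (j : ℝ) := by push_cast; ring
  rcases le_or_gt |((k - j : ℤ) : ℝ)| |(j : ℝ)| with hcase | hcase
  · -- |k - j| ≤ |j|
    have hj2 : |(k : ℝ)| / 2 ≤ |(j : ℝ)| := by
      have := abs_add_le ((k - j : ℤ) : ℝ) (j : ℝ)
      rw [← hsum] at this
      linarith
    have hj1 : (1 : ℝ) ≤ |(j : ℝ)| := by
      have hjne : j ≠ 0 := by
        intro h
        rw [h] at hcase
        simp only [Int.cast_zero, abs_zero, sub_zero] at hcase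
        have : |(k : ℝ)| ≤ 0 := by exact_mod_cast hcase
        linarith
      exact_mod_cast Int.one_le_abs hjne
    have hbj : b j ≤ 𝔳 * |(j : ℝ)| ^ (-q) := by
      have := hbw j; rwa [max_eq_right hj1] at this
    calc |(k : ℝ)| ^ q * (a (k - j) * b j)
        ≤ |(k : ℝ)| ^ q * ((𝔲 * (max 1 |((k - j : ℤ) : ℝ)|) ^ (-p)) * (𝔳 * |(j : ℝ)| ^ (-q))) := by
          refine mul_le_mul_of_nonneg_left ?_ (Real.rpow_nonneg hK0.le q)
          exact mul_le_mul (haw _) hbj (hb j) (by positivity)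
      _ = (|(k : ℝ)| ^ q * |(j : ℝ)| ^ (-q)) * (𝔲 * 𝔳 * (max 1 |((k - j : ℤ) : ℝ)|) ^ (-p)) := by
          ring
      _ ≤ 2 ^ q * (𝔲 * 𝔳 * (max 1 |((k - j : ℤ) : ℝ)|) ^ (-p)) := by
          exact mul_le_mul_of_nonneg_right (fact2 hK0 q hq0 hj2) (by positivity)
      _ ≤ 2 ^ q * 𝔲 * 𝔳 * ((max 1 |((k - j : ℤ) : ℝ)|) ^ (-p) + (max 1 |(j : ℝ)|) ^ (-p)) := by
          have h1 : (0 : ℝ) ≤ (max 1 |(j : ℝ)|) ^ (-p) := Real.rpow_nonneg (hM0 j).le _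
          have h2 : (0 : ℝ) ≤ (2 : ℝ) ^ q := Real.rpow_nonneg (by norm_num) q
          rw [show (2:ℝ) ^ q * (𝔲 * 𝔳 * (max 1 |((k - j : ℤ) : ℝ)|) ^ (-p))
            = 2 ^ q * 𝔲 * 𝔳 * (max 1 |((k - j : ℤ) : ℝ)|) ^ (-p) by ring]
          exact mul_le_mul_of_nonneg_left (le_add_of_nonneg_right h1)
            (mul_nonneg (mul_nonneg h2 h𝔲) h𝔳)
  · -- |j| < |k - j|
    have hm1 : (1 : ℝ) ≤ |((k - j : ℤ) : ℝ)| := by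
      have hmne : (k - j : ℤ) ≠ 0 := by
        intro h
        rw [h] at hcase
        simp only [Int.cast_zero, abs_zero] at hcase
        exact absurd hcase (not_lt.mpr (abs_nonneg _))
      exact_mod_cast Int.one_le_abs hmne
    have hm2 : |(k : ℝ)| / 2 ≤ |((k - j : ℤ) : ℝ)| := by
      have := abs_add_le ((k - j : ℤ) : ℝ) (j : ℝ)
      rw [← hsum] at this
      linarith
    have hMj : max 1 |(j : ℝ)| ≤ |((k - j : ℤ) : ℝ)| := max_le hm1 hcase.le
    have ham : a (k - j) ≤ 𝔲 * (|((k - j : ℤ) : ℝ)| ^ (-q) * (max 1 |(j : ℝ)|) ^ (q - p)) := by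
      have h1 := haw (k - j)
      rw [max_eq_right hm1] at h1
      refine h1.trans (mul_le_mul_of_nonneg_left ?_ h𝔲)
      have hsplit : |((k - j : ℤ) : ℝ)| ^ (-p)
          = |((k - j : ℤ) : ℝ)| ^ (-q) * |((k - j : ℤ) : ℝ)| ^ (q - p) := by
        rw [← Real.rpow_add (by linarith), neg_add_eq_sub]
        norm_num
      rw [hsplit]
      refine mul_le_mul_of_nonneg_left ?_ (Real.rpow_nonneg (by positivity) _)
      exact Real.rpow_le_rpow_of_nonpos (hM0 j) hMj (by linarith)
    calc |(k : ℝ)| ^ q * (a (k - j) * b j)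
        ≤ |(k : ℝ)| ^ q * (𝔲 * (|((k - j : ℤ) : ℝ)| ^ (-q) * (max 1 |(j : ℝ)|) ^ (q - p)) *
            (𝔳 * (max 1 |(j : ℝ)|) ^ (-q))) := by
          refine mul_le_mul_of_nonneg_left ?_ (Real.rpow_nonneg hK0.le q)
          exact mul_le_mul ham (hbw j) (hb j) (by positivity)
      _ = (|(k : ℝ)| ^ q * |((k - j : ℤ) : ℝ)| ^ (-q)) *
            (𝔲 * 𝔳 * ((max 1 |(j : ℝ)|) ^ (q - p) * (max 1 |(j : ℝ)|) ^ (-q))) := by ring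
      _ ≤ 2 ^ q * (𝔲 * 𝔳 * ((max 1 |(j : ℝ)|) ^ (q - p) * (max 1 |(j : ℝ)|) ^ (-q))) := by
          refine mul_le_mul_of_nonneg_right (fact2 hK0 q hq0 hm2) ?_
          positivity
      _ = 2 ^ q * (𝔲 * 𝔳 * (max 1 |(j : ℝ)|) ^ (-p)) := by
          rw [← Real.rpow_add (hM0 j), show q - p + -q = -p by ring]
      _ ≤ 2 ^ q * 𝔲 * 𝔳 * ((max 1 |((k - j : ℤ) : ℝ)|) ^ (-p) + (max 1 |(j : ℝ)|) ^ (-p)) := by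
          have h1 : (0 : ℝ) ≤ (max 1 |((k - j : ℤ) : ℝ)|) ^ (-p) := Real.rpow_nonneg (hM0 _).le _
          have h2 : (0 : ℝ) ≤ (2 : ℝ) ^ q := Real.rpow_nonneg (by norm_num) q
          rw [show (2:ℝ) ^ q * (𝔲 * 𝔳 * (max 1 |(j : ℝ)|) ^ (-p))
            = 2 ^ q * 𝔲 * 𝔳 * (max 1 |(j : ℝ)|) ^ (-p) by ring]
          rw [add_comm]
          exact mul_le_mul_of_nonneg_left (le_add_of_nonneg_right h1)
            (mul_nonneg (mul_nonneg h2 h𝔲) h𝔳)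

lemma summable_maj {p : ℝ} (hp : 1 < p) :
    Summable (fun j : ℤ => (max 1 |(j : ℝ)|) ^ (-p)) := by
  have h1 := summable_abs_int_rpow hp
  have h2 : Summable (fun j : ℤ => |(j : ℝ)| ^ (-p) + if j = 0 then (1 : ℝ) else 0) :=
    h1.add (hasSum_ite_eq (0 : ℤ) (1 : ℝ)).summable
  refine Summable.of_nonneg_of_le (fun j => Real.rpow_nonneg (by positivity) _)
    (fun j => ?_) h2
  by_cases hj : j = 0
  · subst hj
    simp [Real.one_rpow, Real.zero_rpow (by linarith : -p ≠ 0)]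
  · have h1j : (1 : ℝ) ≤ |(j : ℝ)| := by exact_mod_cast Int.one_le_abs hj
    rw [max_eq_right h1j]
    simp [hj]


/-- If `u, v ∈ L²(𝕋¹)` have Fourier coefficients satisfying `|k|^p|û_k| ≤ 𝔲` and
`|k|^q|v̂_k| ≤ 𝔳` for `k ≠ 0` (with `|û_0| ≤ 𝔲`, `|v̂_0| ≤ 𝔳`), where `1 ≤ q < p`, then the
product `w = uv` satisfies `|k|^q|ŵ_k| ≤ C_{p,q}·𝔲·𝔳` for all `k ≠ 0`, with `C_{p,q}`
depending only on `p` and `q`. -/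
theorem stmt1 (p q : ℝ) (hq : 1 ≤ q) (hpq : q < p) :
    ∃ C : ℝ, 0 < C ∧
      ∀ (u v : ℝ → ℂ) (𝔲 𝔳 : ℝ),
        Function.Periodic u (2 * π) → Function.Periodic v (2 * π) →
        MemLp u 2 (volume.restrict (Set.Ioc (-π) π)) →
        MemLp v 2 (volume.restrict (Set.Ioc (-π) π)) →
        (∀ k : ℤ, k ≠ 0 → |(k : ℝ)| ^ p * ‖fc u k‖ ≤ 𝔲) → ‖fc u 0‖ ≤ 𝔲 →
        (∀ k : ℤ, k ≠ 0 → |(k : ℝ)| ^ q * ‖fc v k‖ ≤ 𝔳) → ‖fc v 0‖ ≤ 𝔳 →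
        ∀ k : ℤ, k ≠ 0 →
          |(k : ℝ)| ^ q * ‖fc (fun x => u x * v x) k‖ ≤ C * 𝔲 * 𝔳 := by
  have hp1 : 1 < p := lt_of_le_of_lt hq hpq
  set w : ℤ → ℝ := fun j => (max 1 |(j : ℝ)|) ^ (-p) with hw
  have hws : Summable w := summable_maj hp1
  set S := ∑' j : ℤ, w j with hS
  have hS1 : (1 : ℝ) ≤ S := by
    have h0 : w 0 ≤ S := Summable.le_tsum hws 0 (fun i _ => Real.rpow_nonneg (by positivity) _)
    simpa [hw, Real.one_rpow] using h0
  have hCpos : (0 : ℝ) < 2 ^ q * (2 * S) := by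
    have : (0 : ℝ) < (2 : ℝ) ^ q := Real.rpow_pos_of_pos (by norm_num) q
    nlinarith
  refine ⟨2 ^ q * (2 * S), hCpos, ?_⟩
  intro u v 𝔲 𝔳 hup hvp hu2 hv2 hufc hu0 hvfc hv0 k hk
  have h𝔲 : 0 ≤ 𝔲 := le_trans (norm_nonneg _) hu0
  have h𝔳 : 0 ≤ 𝔳 := le_trans (norm_nonneg _) hv0
  have hle : -π ≤ π := by linarith [pi_pos]
  obtain ⟨u', su', huu'⟩ := hu2.1
  obtain ⟨v', sv', hvv'⟩ := hv2.1
  have hu2' : MemLp u' 2 (volume.restrict (Set.Ioc (-π) π)) := hu2.ae_eq huu'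
  have hv2' : MemLp v' 2 (volume.restrict (Set.Ioc (-π) π)) := hv2.ae_eq hvv'
  have fcu : ∀ i : ℤ, fc u i = fc u' i := by
    intro i
    unfold fc
    congr 1
    rw [intervalIntegral.integral_of_le hle, intervalIntegral.integral_of_le hle]
    refine integral_congr_ae ?_
    filter_upwards [huu'] with x hx
    rw [hx]
  have fcv : ∀ i : ℤ, fc v i = fc v' i := by
    intro i
    unfold fc
    congr 1
    rw [intervalIntegral.integral_of_le hle, intervalIntegral.integral_of_le hle]
    refine integral_congr_ae ?_
    filter_upwards [hvv'] with x hx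
    rw [hx]
  have fcw : fc (fun x => u x * v x) k = fc (fun x => u' x * v' x) k := by
    unfold fc
    congr 1
    rw [intervalIntegral.integral_of_le hle, intervalIntegral.integral_of_le hle]
    refine integral_congr_ae ?_
    filter_upwards [huu', hvv'] with x hx hy
    rw [hx, hy]
  have hU := memLp_liftIoc su'.measurable hu2'
  have hV := memLp_liftIoc sv'.measurable hv2'
  have hconv : fc (fun x => u x * v x) k = ∑' j : ℤ, fc u (k - j) * fc v j := by
    rw [fcw, fc_eq_fourierCoeff]
    have hlm : AddCircle.liftIoc (2 * π) (-π) (fun x => u' x * v' x)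
        = fun t => (AddCircle.liftIoc (2 * π) (-π) u') t
            * (AddCircle.liftIoc (2 * π) (-π) v') t := rfl
    rw [hlm, fourierCoeff_mul _ _ hU hV k]
    refine tsum_congr fun j => ?_
    rw [fcu, fcv, fc_eq_fourierCoeff, fc_eq_fourierCoeff]
  set a : ℤ → ℝ := fun i => ‖fc u i‖ with hadef
  set b : ℤ → ℝ := fun i => ‖fc v i‖ with hbdef
  have haw : ∀ i, a i ≤ 𝔲 * (max 1 |(i : ℝ)|) ^ (-p) := by
    intro i
    by_cases hi : i = 0
    · subst hi
      simpa [hadef, Real.one_rpow] using hu0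
    · have h1 : (1 : ℝ) ≤ |(i : ℝ)| := by exact_mod_cast Int.one_le_abs hi
      rw [max_eq_right h1, Real.rpow_neg (by positivity), mul_comm 𝔲, inv_mul_eq_div]
      have h2 := hufc i hi
      have h3 : (0 : ℝ) < |(i : ℝ)| ^ p := Real.rpow_pos_of_pos (by linarith) p
      rw [le_div_iff₀ h3, mul_comm]
      exact h2
  have hbw : ∀ i, b i ≤ 𝔳 * (max 1 |(i : ℝ)|) ^ (-q) := by
    intro i
    by_cases hi : i = 0
    · subst hi
      simpa [hbdef, Real.one_rpow] using hv0
    · have h1 : (1 : ℝ) ≤ |(i : ℝ)| := by exact_mod_cast Int.one_le_abs hi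
      rw [max_eq_right h1, Real.rpow_neg (by positivity), mul_comm 𝔳, inv_mul_eq_div]
      have h2 := hvfc i hi
      have h3 : (0 : ℝ) < |(i : ℝ)| ^ q := Real.rpow_pos_of_pos (by linarith) q
      rw [le_div_iff₀ h3, mul_comm]
      exact h2
  have hbv : ∀ i, b i ≤ 𝔳 := by
    intro i
    refine le_trans (hbw i) ?_
    have h1 : (max 1 |(i : ℝ)|) ^ (-q) ≤ 1 :=
      Real.rpow_le_one_of_one_le_of_nonpos (le_max_left _ _) (by linarith)
    calc 𝔳 * (max 1 |(i : ℝ)|) ^ (-q) ≤ 𝔳 * 1 := mul_le_mul_of_nonneg_left h1 h𝔳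
      _ = 𝔳 := mul_one _
  have hwk : Summable (fun j : ℤ => w (k - j)) :=
    ((Equiv.subLeft k).summable_iff (f := w)).mpr hws
  have hsum1 : Summable (fun j : ℤ => a (k - j) * b j) := by
    refine Summable.of_nonneg_of_le (fun j => mul_nonneg (norm_nonneg _) (norm_nonneg _))
      (fun j => ?_) (hwk.mul_left (𝔲 * 𝔳))
    calc a (k - j) * b j ≤ (𝔲 * w (k - j)) * 𝔳 :=
          mul_le_mul (haw _) (hbv j) (norm_nonneg _)
            (mul_nonneg h𝔲 (Real.rpow_nonneg (by positivity) _))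
      _ = 𝔲 * 𝔳 * w (k - j) := by ring
  have hnorm : ‖fc (fun x => u x * v x) k‖ ≤ ∑' j : ℤ, a (k - j) * b j := by
    rw [hconv]
    have h1 : Summable (fun j : ℤ => ‖fc u (k - j) * fc v j‖) := by
      simpa [norm_mul] using hsum1
    refine (norm_tsum_le_tsum_norm h1).trans (le_of_eq ?_)
    exact tsum_congr fun j => norm_mul _ _
  have hq0 : (0 : ℝ) ≤ q := by linarith
  have hKq : (0 : ℝ) ≤ |(k : ℝ)| ^ q := Real.rpow_nonneg (abs_nonneg _) q
  calc |(k : ℝ)| ^ q * ‖fc (fun x => u x * v x) k‖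
      ≤ |(k : ℝ)| ^ q * ∑' j : ℤ, a (k - j) * b j := mul_le_mul_of_nonneg_left hnorm hKq
    _ = ∑' j : ℤ, |(k : ℝ)| ^ q * (a (k - j) * b j) := tsum_mul_left.symm
    _ ≤ ∑' j : ℤ, 2 ^ q * 𝔲 * 𝔳 * (w (k - j) + w j) := by
        refine Summable.tsum_le_tsum (fun j => ?_) (hsum1.mul_left _) ((hwk.add hws).mul_left _)
        exact key_pointwise p q hq hpq 𝔲 𝔳 h𝔲 h𝔳 a b (fun i => norm_nonneg _)
          (fun i => norm_nonneg _) haw hbw k j hk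
    _ = 2 ^ q * 𝔲 * 𝔳 * ∑' j : ℤ, (w (k - j) + w j) := tsum_mul_left
    _ = 2 ^ q * 𝔲 * 𝔳 * (S + S) := by
        rw [Summable.tsum_add hwk hws]
        congr 1
        exact congrArg (· + S) ((Equiv.subLeft k).tsum_eq w)
    _ = 2 ^ q * (2 * S) * 𝔲 * 𝔳 := by ring
end

section
/- For any γ ∈ H¹(𝕋¹; ℝ^d) and any z ∈ 𝕋¹, the Poincaré-type inequality (1/2π)∫_{𝕋¹} |γ(x+z) - γ(x)|² dx ≤ 2(1 - cos z) · (1/2π)∫_{𝕋¹} |γ'(x)|² dx holds. -/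
open MeasureTheory Real

open Set Function intervalIntegral AddCircle
open scoped ENNReal

noncomputable section

local instance fact2pi : Fact (0 < 2 * π) := ⟨by positivity⟩

lemma abs_sin_nat_mul (t : ℝ) : ∀ n : ℕ, |Real.sin (n * t)| ≤ n * |Real.sin t| := by
  intro n
  induction n with
  | zero => simp
  | succ n ih =>
    have : ((n:ℝ)+1) * t = n*t + t := by ring
    rw [Nat.cast_succ, this, Real.sin_add]
    calc |Real.sin (n*t) * Real.cos t + Real.cos (n*t) * Real.sin t|
        ≤ |Real.sin (n*t) * Real.cos t| + |Real.cos (n*t) * Real.sin t| := abs_add_le _ _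
      _ ≤ |Real.sin (n*t)| * 1 + 1 * |Real.sin t| := by
          rw [abs_mul, abs_mul]
          gcongr
          · exact Real.abs_cos_le_one _
          · exact Real.abs_cos_le_one _
      _ ≤ n * |Real.sin t| + 1 * |Real.sin t| := by rw [mul_one]; gcongr
      _ = ((n:ℝ)+1) * |Real.sin t| := by ring

lemma one_sub_cos_eq (θ : ℝ) : 1 - Real.cos θ = 2 * Real.sin (θ/2)^2 := by
  have h : Real.cos (2 * (θ/2)) = 2 * Real.cos (θ/2)^2 - 1 := Real.cos_two_mul (θ/2)
  have h2 := Real.sin_sq_add_cos_sq (θ/2)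
  have : (2:ℝ) * (θ/2) = θ := by ring
  rw [this] at h
  nlinarith

lemma one_sub_cos_int_mul (n : ℤ) (z : ℝ) :
    1 - Real.cos (n * z) ≤ (n:ℝ)^2 * (1 - Real.cos z) := by
  rw [one_sub_cos_eq (n*z), one_sub_cos_eq z]
  have h1 : |Real.sin ((n*z)/2)| ≤ |(n:ℝ)| * |Real.sin (z/2)| := by
    have h2 := abs_sin_nat_mul (z/2) n.natAbs
    have hcast : ((n.natAbs : ℝ)) = |(n:ℝ)| := by
      rw [Nat.cast_natAbs, Int.cast_abs]
    rw [hcast] at h2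
    rcases le_or_gt 0 (n:ℝ) with hn | hn
    · have : (n*z)/2 = |(n:ℝ)| * (z/2) := by rw [abs_of_nonneg hn]; ring
      rw [this]; exact h2
    · have : (n*z)/2 = -(|(n:ℝ)| * (z/2)) := by rw [abs_of_neg hn]; ring
      rw [this, Real.sin_neg, abs_neg]; exact h2
  have h0 := abs_nonneg (Real.sin ((n*z)/2))
  have h3 : |Real.sin ((n*z)/2)|^2 ≤ (|(n:ℝ)| * |Real.sin (z/2)|)^2 := by
    apply sq_le_sq' _ h1; linarith [abs_nonneg ((n:ℝ) ), mul_nonneg (abs_nonneg ((n:ℝ))) (abs_nonneg (Real.sin (z/2)))]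
  rw [sq_abs, mul_pow, sq_abs, sq_abs] at h3
  nlinarith


lemma fourier_eq_exp (n : ℤ) (x : ℝ) :
    fourier n (x : AddCircle (2*π)) = Complex.exp (((n * x : ℝ)) * Complex.I) := by
  rw [fourier_coe_apply]
  congr 1
  have hπ : (π:ℂ) ≠ 0 := by exact_mod_cast Real.pi_ne_zero
  push_cast
  field_simp

-- the measurable section of mk
def sig : AddCircle (2*π) → ℝ := fun x => ↑(AddCircle.equivIoc (2*π) (-π) x)

lemma sig_measurable : Measurable sig :=
  measurable_subtype_coe.comp (AddCircle.measurableEquivIoc (2*π) (-π)).measurable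

lemma sig_coe (b : ℝ) : sig (b : AddCircle (2*π)) = toIocMod two_pi_pos (-π) b := by
  rw [sig, AddCircle.equivIoc]
  rw [QuotientAddGroup.equivIocMod_coe]

lemma coe_sig (x : AddCircle (2*π)) : ((sig x : ℝ) : AddCircle (2*π)) = x := by
  induction x using QuotientAddGroup.induction_on with
  | H b =>
    rw [sig_coe, QuotientAddGroup.eq]
    refine ⟨toIocDiv two_pi_pos (-π) b, ?_⟩
    have h := toIocMod_add_toIocDiv_zsmul two_pi_pos (-π) b
    show toIocDiv two_pi_pos (-π) b • (2*π) = _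
    rw [zsmul_eq_mul] at h ⊢
    linarith

lemma sig_mem : ∀ x, sig x ∈ Set.Ioc (-π) (-π + 2*π) := fun x => (AddCircle.equivIoc (2*π) (-π) x).2

lemma sig_coe_self {b : ℝ} (hb : b ∈ Set.Ioc (-π) (-π + 2*π)) : sig (b : AddCircle (2*π)) = b := by
  rw [sig_coe]; exact (toIocMod_eq_self two_pi_pos).mpr hb

lemma lift_eq_comp {f : ℝ → ℂ} (hf : Function.Periodic f (2*π)) (x : AddCircle (2*π)) :
    hf.lift x = f (sig x) := by
  conv_lhs => rw [← coe_sig x]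
  rw [Function.Periodic.lift_coe]

lemma aesm_of_intervalIntegrable {f : ℝ → ℂ} (h : ∀ a b : ℝ, IntervalIntegrable f volume a b) :
    AEStronglyMeasurable f (volume : Measure ℝ) := by
  have huniv : (Set.univ : Set ℝ) = ⋃ n : ℕ, Set.Ioc (-(n:ℝ)-1) ((n:ℝ)+1) := by
    ext x
    simp only [Set.mem_univ, Set.mem_iUnion, Set.mem_Ioc, true_iff]
    refine ⟨⌈|x|⌉₊, ?_, ?_⟩
    · have h1 : |x| ≤ ⌈|x|⌉₊ := Nat.le_ceil _
      have h2 : -|x| ≤ x := neg_abs_le x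
      linarith
    · have h1 : |x| ≤ ⌈|x|⌉₊ := Nat.le_ceil _
      have h2 : x ≤ |x| := le_abs_self x
      linarith
  rw [← Measure.restrict_univ (μ := (volume : Measure ℝ)), huniv,
    aestronglyMeasurable_iUnion_iff]
  intro n
  exact ((h (-(n:ℝ)-1) ((n:ℝ)+1)).1).aestronglyMeasurable

lemma null_preimage_sig {M : Set ℝ} (hM : MeasurableSet M)
    (h0 : volume (M ∩ Set.Ioc (-π) (-π + 2*π)) = 0) :
    (volume : Measure (AddCircle (2*π))) (sig ⁻¹' M) = 0 := by
  have hpre : MeasurableSet (sig ⁻¹' M) := sig_measurable hM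
  rw [← (AddCircle.measurePreserving_mk (2*π) (-π)).measure_preimage hpre.nullMeasurableSet]
  have : ((↑) : ℝ → AddCircle (2*π)) ⁻¹' (sig ⁻¹' M) ∩ Set.Ioc (-π) (-π + 2*π)
      = M ∩ Set.Ioc (-π) (-π + 2*π) := by
    ext x
    simp only [Set.mem_inter_iff, Set.mem_preimage, Set.mem_Ioc, and_congr_left_iff]
    intro hx
    rw [sig_coe_self hx]
  rw [Measure.restrict_apply (AddCircle.measurable_mk' hpre), this]
  exact h0

lemma aesm_lift {f : ℝ → ℂ} (hf : Function.Periodic f (2*π))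
    (hae : AEStronglyMeasurable f (volume.restrict (Set.Ioc (-π) π))) :
    AEStronglyMeasurable hf.lift (volume : Measure (AddCircle (2*π))) := by
  have hend : -π + 2*π = π := by ring
  obtain ⟨h₀, h₀sm, heq⟩ := hae
  have hnull : volume.restrict (Set.Ioc (-π) π) {x | f x ≠ h₀ x} = 0 := heq
  obtain ⟨M, hMsup, hMmeas, hMnull⟩ := exists_measurable_superset_of_null hnull
  rw [Measure.restrict_apply hMmeas] at hMnull
  refine ⟨fun x => h₀ (sig x), h₀sm.comp_measurable sig_measurable, ?_⟩
  have hsub : {x : AddCircle (2*π) | hf.lift x ≠ h₀ (sig x)} ⊆ sig ⁻¹' M := by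
    intro x hx
    simp only [Set.mem_setOf_eq, lift_eq_comp hf] at hx
    by_contra hc
    exact hx (by by_contra hc2; exact hc (hMsup hc2))
  have := null_preimage_sig hMmeas (by rw [hend]; exact hMnull)
  exact measure_mono_null hsub this

lemma memℒp_lift {f : ℝ → ℂ} (hf : Function.Periodic f (2*π))
    (h2 : MemLp f 2 (volume.restrict (Set.Ioc (-π) π))) :
    MemLp hf.lift 2 (haarAddCircle : Measure (AddCircle (2*π))) := by
  have hend : -π + 2*π = π := by ring
  have haesm : AEStronglyMeasurable hf.lift (volume : Measure (AddCircle (2*π))) :=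
    aesm_lift hf h2.aestronglyMeasurable
  have hmem : MemLp hf.lift 2 (volume : Measure (AddCircle (2*π))) := by
    refine ⟨haesm, ?_⟩
    rw [← (AddCircle.measurePreserving_mk (2*π) (-π)).map_eq] at haesm ⊢
    rw [eLpNorm_map_measure haesm (AddCircle.measurable_mk'.aemeasurable)]
    have : hf.lift ∘ ((↑) : ℝ → AddCircle (2*π)) = f := by
      funext x; exact hf.lift_coe x
    rw [this, hend]
    exact h2.2
  have hhaar : (haarAddCircle : Measure (AddCircle (2*π)))
      = (ENNReal.ofReal (2*π))⁻¹ • (volume : Measure (AddCircle (2*π))) := by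
    rw [AddCircle.volume_eq_smul_haarAddCircle, smul_smul,
      ENNReal.inv_mul_cancel (ne_of_gt (ENNReal.ofReal_pos.2 two_pi_pos)) ENNReal.ofReal_ne_top,
      one_smul]
  rw [hhaar]
  exact hmem.smul_measure (ENNReal.inv_ne_top.mpr (ne_of_gt (ENNReal.ofReal_pos.2 two_pi_pos)))

lemma integral_haar_eq (h : AddCircle (2*π) → ℝ) :
    ∫ t, h t ∂(haarAddCircle : Measure (AddCircle (2*π)))
      = (1/(2*π)) * ∫ x in (-π)..π, h ↑x := by
  have hend : -π + 2*π = π := by ring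
  have h1 : ∫ x in (-π)..π, h ↑x = ∫ t, h t ∂(volume : Measure (AddCircle (2*π))) := by
    have := AddCircle.intervalIntegral_preimage (2*π) (-π) h
    rw [hend] at this
    exact this
  rw [h1, AddCircle.volume_eq_smul_haarAddCircle, MeasureTheory.integral_smul_measure]
  rw [ENNReal.toReal_ofReal two_pi_pos.le]
  rw [smul_eq_mul, ← mul_assoc]
  rw [one_div, inv_mul_cancel₀ (ne_of_gt two_pi_pos), one_mul]

lemma fourierCoeff_lift {f : ℝ → ℂ} (hf : Function.Periodic f (2*π)) (n : ℤ) :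
    fourierCoeff hf.lift n
      = (1/(2*π) : ℝ) • ∫ x in (-π)..π, fourier (-n) (x : AddCircle (2*π)) • f x := by
  rw [fourierCoeff_eq_intervalIntegral _ n (-π)]
  have hend : -π + 2*π = π := by ring
  rw [hend]
  rfl

lemma norm_fourier_one (m : ℤ) (x : ℝ) : ‖fourier m (x : AddCircle (2*π))‖ = 1 := by
  rw [fourier_eq_exp, Complex.norm_exp_ofReal_mul_I]

lemma fourier_coe_sub (n : ℤ) (s u : ℝ) :
    fourier (-n) ((s - u : ℝ) : AddCircle (2*π))
      = fourier n (u : AddCircle (2*π)) * fourier (-n) (s : AddCircle (2*π)) := by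
  simp only [fourier_eq_exp]
  rw [← Complex.exp_add]
  congr 1
  push_cast
  ring

lemma J_translate {f : ℝ → ℂ} (hperf : Function.Periodic f (2*π))
    (n : ℤ) (u : ℝ) :
    ∫ t in (-π:ℝ)..π, fourier (-n) (t : AddCircle (2*π)) • f (t+u)
      = fourier n (u : AddCircle (2*π)) • ∫ t in (-π:ℝ)..π, fourier (-n) (t : AddCircle (2*π)) • f t := by
  set Φ : ℝ → ℂ := fun s => fourier (-n) ((s - u : ℝ) : AddCircle (2*π)) • f s with hΦ
  have h1 : ∫ t in (-π:ℝ)..π, fourier (-n) (t : AddCircle (2*π)) • f (t+u)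
      = ∫ t in (-π:ℝ)..π, Φ (t+u) := by
    apply intervalIntegral.integral_congr
    intro t _
    simp only [hΦ]
    rw [add_sub_cancel_right]
  have h2 : ∫ t in (-π:ℝ)..π, Φ (t+u) = ∫ s in (-π+u)..(π+u), Φ s :=
    intervalIntegral.integral_comp_add_right Φ u
  have hΦper : Function.Periodic Φ (2*π) := by
    intro s
    simp only [hΦ]
    rw [show s + 2*π - u = (s - u) + 2*π by ring, AddCircle.coe_add_period, hperf s]
  have h3 : ∫ s in (-π+u)..(π+u), Φ s = ∫ s in (-π:ℝ)..π, Φ s := by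
    have h := hΦper.intervalIntegral_add_eq (-π+u) (-π)
    rw [show (-π+u)+(2*π) = π + u by ring, show (-π)+(2*π) = π by ring] at h
    exact h
  have h4 : ∫ s in (-π:ℝ)..π, Φ s
      = fourier n (u : AddCircle (2*π)) • ∫ t in (-π:ℝ)..π, fourier (-n) (t : AddCircle (2*π)) • f t := by
    rw [← intervalIntegral.integral_smul]
    apply intervalIntegral.integral_congr
    intro s _
    simp only [hΦ]
    rw [fourier_coe_sub, mul_smul]
  rw [h1, h2, h3, h4]

lemma J_swap {g' : ℝ → ℂ} (hInt : ∀ a b : ℝ, IntervalIntegrable g' volume a b)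
    {z : ℝ} (hz : 0 ≤ z) (n : ℤ) :
    ∫ t in (-π:ℝ)..π, (∫ u in (0:ℝ)..z, fourier (-n) (t : AddCircle (2*π)) • g' (t+u))
      = ∫ u in (0:ℝ)..z, (∫ t in (-π:ℝ)..π, fourier (-n) (t : AddCircle (2*π)) • g' (t+u)) := by
  have hππ : (-π:ℝ) ≤ π := by linarith [Real.pi_pos]
  have haesm := aesm_of_intervalIntegrable hInt
  set μA := volume.restrict (Set.Ioc (-π:ℝ) π) with hμA
  set μB := volume.restrict (Set.Ioc (0:ℝ) z) with hμB
  set F : ℝ × ℝ → ℂ := fun p => fourier (-n) (p.1 : AddCircle (2*π)) • g' (p.1 + p.2) with hF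
  have qmp_fst : Measure.QuasiMeasurePreserving (Prod.fst : ℝ×ℝ → ℝ)
      ((volume : Measure ℝ).prod volume) volume := by
    refine ⟨measurable_fst, Measure.AbsolutelyContinuous.mk fun s hs h0 => ?_⟩
    rw [Measure.map_apply measurable_fst hs]
    have : (Prod.fst : ℝ×ℝ→ℝ) ⁻¹' s = s ×ˢ Set.univ := by ext p; simp
    rw [this, Measure.prod_prod, h0, zero_mul]
  have mp := measurePreserving_add_prod (volume : Measure ℝ) (volume : Measure ℝ)
  have qmp_shear : Measure.QuasiMeasurePreserving (fun p : ℝ×ℝ => (p.1 + p.2, p.2))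
      (μA.prod μB) ((volume : Measure ℝ).prod volume) := by
    refine ⟨mp.measurable, ?_⟩
    have hle : μA.prod μB ≤ (volume : Measure ℝ).prod volume := by
      rw [hμA, hμB, Measure.prod_restrict]
      exact Measure.restrict_le_self
    have h2 : Measure.map (fun p : ℝ×ℝ => (p.1 + p.2, p.2)) (μA.prod μB)
        ≤ (volume : Measure ℝ).prod volume := by
      calc Measure.map (fun p : ℝ×ℝ => (p.1 + p.2, p.2)) (μA.prod μB)
          ≤ Measure.map (fun p : ℝ×ℝ => (p.1 + p.2, p.2)) ((volume : Measure ℝ).prod volume) :=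
            Measure.map_mono hle mp.measurable
        _ = (volume : Measure ℝ).prod volume := mp.map_eq
    exact Measure.absolutelyContinuous_of_le h2
  have hG : AEStronglyMeasurable (fun p : ℝ×ℝ => g' (p.1 + p.2)) (μA.prod μB) := by
    have h1 : AEStronglyMeasurable (fun p : ℝ×ℝ => g' p.1)
        ((volume : Measure ℝ).prod volume) := haesm.comp_quasiMeasurePreserving qmp_fst
    exact h1.comp_quasiMeasurePreserving qmp_shear
  have hFe : AEStronglyMeasurable F (μA.prod μB) := by
    refine AEStronglyMeasurable.smul (f := fun p : ℝ×ℝ => fourier (-n) (p.1 : AddCircle (2*π))) ?_ hG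
    exact (((map_continuous (fourier (-n))).comp
      ((AddCircle.continuous_mk' (2*π)).comp continuous_fst)).aestronglyMeasurable)
  have hFint : Integrable F (μA.prod μB) := by
    rw [MeasureTheory.integrable_prod_iff hFe]
    constructor
    · apply Filter.Eventually.of_forall
      intro t
      have h1 : IntervalIntegrable (fun u => g' (t+u)) volume 0 z := by
        have := (hInt t (t+z)).comp_add_left t
        simpa using this
      rw [intervalIntegrable_iff_integrableOn_Ioc_of_le hz] at h1
      exact h1.smul (fourier (-n) (t : AddCircle (2*π)))
    · have heq : (fun t => ∫ u, ‖F (t, u)‖ ∂μB)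
          = fun t => (∫ s in (0:ℝ)..(t+z), ‖g' s‖) - ∫ s in (0:ℝ)..t, ‖g' s‖ := by
        funext t
        have e1 : ∫ u, ‖F (t, u)‖ ∂μB = ∫ u in (0:ℝ)..z, ‖g' (t+u)‖ := by
          rw [intervalIntegral.integral_of_le hz, hμB]
          apply MeasureTheory.integral_congr_ae
          apply Filter.Eventually.of_forall
          intro u
          simp only [hF]
          rw [norm_smul, norm_fourier_one, one_mul]
        rw [e1]
        have e2 : ∫ u in (0:ℝ)..z, ‖g' (t+u)‖ = ∫ s in t..(t+z), ‖g' s‖ := by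
          have h := intervalIntegral.integral_comp_add_left (a := 0) (b := z)
            (fun s => ‖g' s‖) t
          rw [add_zero] at h
          exact h
        rw [e2]
        have e3 := intervalIntegral.integral_add_adjacent_intervals (a := (0:ℝ)) (b := t)
          (c := t+z) (hInt 0 t).norm (hInt t (t+z)).norm
        linarith
      rw [heq]
      have hΨ : Continuous fun x : ℝ => ∫ s in (0:ℝ)..x, ‖g' s‖ :=
        intervalIntegral.continuous_primitive (fun a b => (hInt a b).norm) 0
      have hcont : Continuous fun t : ℝ =>
          (∫ s in (0:ℝ)..(t+z), ‖g' s‖) - ∫ s in (0:ℝ)..t, ‖g' s‖ :=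
        (hΨ.comp (continuous_id.add continuous_const)).sub hΨ
      exact hcont.integrableOn_Ioc
  have hswap := MeasureTheory.integral_integral_swap (f := fun t u => F (t, u)) hFint
  calc ∫ t in (-π:ℝ)..π, (∫ u in (0:ℝ)..z, fourier (-n) (t : AddCircle (2*π)) • g' (t+u))
      = ∫ t, (∫ u, F (t, u) ∂μB) ∂μA := by
        rw [intervalIntegral.integral_of_le hππ]
        apply MeasureTheory.integral_congr_ae
        apply Filter.Eventually.of_forall
        intro t
        dsimp only
        rw [intervalIntegral.integral_of_le hz]
    _ = ∫ u, (∫ t, F (t, u) ∂μA) ∂μB := hswap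
    _ = ∫ u in (0:ℝ)..z, (∫ t in (-π:ℝ)..π, fourier (-n) (t : AddCircle (2*π)) • g' (t+u)) := by
        rw [intervalIntegral.integral_of_le hz]
        apply MeasureTheory.integral_congr_ae
        apply Filter.Eventually.of_forall
        intro u
        dsimp only
        rw [intervalIntegral.integral_of_le hππ]

lemma key_complex {g g' : ℝ → ℂ} (hg : Continuous g)
    (hper : Function.Periodic g (2*π)) (hper' : Function.Periodic g' (2*π))
    (hInt : ∀ a b : ℝ, IntervalIntegrable g' volume a b)
    (hFTC : ∀ a b : ℝ, g b - g a = ∫ x in a..b, g' x)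
    (hL2 : MemLp g' 2 (volume.restrict (Set.Ioc (-π) π)))
    {z : ℝ} (hz : 0 ≤ z) :
    (1/(2*π)) * ∫ x in (-π)..π, ‖g (x+z) - g x‖^2
      ≤ 2*(1 - Real.cos z) * ((1/(2*π)) * ∫ x in (-π)..π, ‖g' x‖^2) := by
  set Δ : ℝ → ℂ := fun t => g (t+z) - g t with hΔ
  have hΔper : Function.Periodic Δ (2*π) := by
    intro t
    simp only [hΔ]
    rw [show t + 2*π + z = (t+z) + 2*π by ring, hper (t+z), hper t]
  have hΔcont : Continuous Δ := (hg.comp (continuous_id.add continuous_const)).sub hg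
  have hliftcont : Continuous hΔper.lift := hΔcont.quotient_liftOn' _
  set ΔC : C(AddCircle (2*π), ℂ) := ⟨hΔper.lift, hliftcont⟩ with hΔC
  set J : ℤ → ℂ := fun n => ∫ t in (-π:ℝ)..π, fourier (-n) (t : AddCircle (2*π)) • g' t with hJ
  -- the coefficient formula
  have hcoef : ∀ n : ℤ, fourierCoeff hΔper.lift n
      = (∫ u in (0:ℝ)..z, fourier n (u : AddCircle (2*π))) • fourierCoeff hper'.lift n := by
    intro n
    rw [fourierCoeff_lift hΔper, fourierCoeff_lift hper']
    have step1 : ∫ t in (-π:ℝ)..π, fourier (-n) (t : AddCircle (2*π)) • Δ t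
        = ∫ t in (-π:ℝ)..π,
            (∫ u in (0:ℝ)..z, fourier (-n) (t : AddCircle (2*π)) • g' (t+u)) := by
      apply intervalIntegral.integral_congr
      intro t _
      dsimp only
      have h1 : Δ t = ∫ u in (0:ℝ)..z, g' (t+u) := by
        simp only [hΔ]
        rw [hFTC t (t+z)]
        have h2 := intervalIntegral.integral_comp_add_left (a := (0:ℝ)) (b := z) g' t
        rw [add_zero] at h2
        rw [← h2]
      rw [h1]
      exact (intervalIntegral.integral_smul _ _).symm
    have step3 : ∀ u : ℝ, ∫ t in (-π:ℝ)..π, fourier (-n) (t : AddCircle (2*π)) • g' (t+u)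
        = fourier n (u : AddCircle (2*π)) • J n := fun u => J_translate hper' n u
    rw [step1, J_swap hInt hz n,
      intervalIntegral.integral_congr (g := fun u : ℝ => fourier n (u : AddCircle (2*π)) • J n)
        (fun u _ => step3 u),
      intervalIntegral.integral_smul_const]
    rw [smul_comm]
  have hc0 : fourierCoeff hper'.lift 0 = 0 := by
    rw [fourierCoeff_lift hper' 0]
    have h1 : ∫ t in (-π:ℝ)..π, fourier (-0) (t : AddCircle (2*π)) • g' t
        = ∫ t in (-π:ℝ)..π, g' t := by
      apply intervalIntegral.integral_congr
      intro t _
      dsimp only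
      rw [neg_zero, fourier_zero, one_smul]
    rw [h1]
    have h2 : ∫ t in (-π:ℝ)..π, g' t = g π - g (-π) := (hFTC (-π) π).symm
    have h3 : g π = g (-π) := by
      have h4 := hper (-π)
      rw [show -π + 2*π = π by ring] at h4
      exact h4
    rw [h2, h3, sub_self, smul_zero]
  -- mode-by-mode bound
  have hmode : ∀ n : ℤ, ‖fourierCoeff hΔper.lift n‖^2
      ≤ 2*(1-Real.cos z) * ‖fourierCoeff hper'.lift n‖^2 := by
    intro n
    rcases eq_or_ne n 0 with rfl | hn
    · rw [hcoef 0, hc0, smul_zero]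
      simp
    · rw [hcoef n, norm_smul, mul_pow]
      have hq : ∫ u in (0:ℝ)..z, fourier n (u : AddCircle (2*π))
          = (Complex.exp ((n*z:ℝ) * Complex.I) - 1) / ((n:ℂ) * Complex.I) := by
        have h1 : ∫ u in (0:ℝ)..z, fourier n (u : AddCircle (2*π))
            = ∫ u in (0:ℝ)..z, Complex.exp (((n:ℂ) * Complex.I) * u) := by
          apply intervalIntegral.integral_congr
          intro u _
          dsimp only
          rw [fourier_eq_exp]
          congr 1
          push_cast
          ring
        have hc : ((n:ℂ) * Complex.I) ≠ 0 :=
          mul_ne_zero (by exact_mod_cast hn) Complex.I_ne_zero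
        rw [h1, integral_exp_mul_complex hc]
        have e0 : ((n:ℂ) * Complex.I) * ((0:ℝ):ℂ) = 0 := by push_cast; ring
        rw [e0, Complex.exp_zero]
        congr 2
        push_cast
        ring
      have hn2 : (0:ℝ) < (n:ℝ)^2 := by
        have : (n:ℝ) ≠ 0 := by exact_mod_cast hn
        positivity
      have hnormq : ‖∫ u in (0:ℝ)..z, fourier n (u : AddCircle (2*π))‖^2
          ≤ 2*(1-Real.cos z) := by
        rw [hq, norm_div, div_pow]
        have hden : ‖(n:ℂ) * Complex.I‖^2 = (n:ℝ)^2 := by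
          rw [norm_mul, Complex.norm_I, mul_one]
          rw [show ((n:ℂ)) = (((n:ℝ)):ℂ) by push_cast; ring, Complex.norm_real]
          rw [Real.norm_eq_abs, sq_abs]
        have hnum : ‖Complex.exp ((n*z:ℝ) * Complex.I) - 1‖^2 = 2 - 2*Real.cos ((n:ℝ)*z) := by
          rw [Complex.sq_norm, Complex.normSq_apply]
          simp only [Complex.sub_re, Complex.sub_im, Complex.exp_ofReal_mul_I_re,
            Complex.exp_ofReal_mul_I_im, Complex.one_re, Complex.one_im]
          push_cast
          nlinarith [Real.sin_sq_add_cos_sq ((n:ℝ)*z)]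
        rw [hden, hnum, div_le_iff₀ hn2]
        have hineq := one_sub_cos_int_mul n z
        nlinarith
      have := mul_le_mul_of_nonneg_right hnormq
        (sq_nonneg ‖fourierCoeff hper'.lift n‖)
      exact this
  -- Parseval for Δ
  have hparΔ : ∑' n : ℤ, ‖fourierCoeff hΔper.lift n‖^2
      = (1/(2*π)) * ∫ x in (-π)..π, ‖Δ x‖^2 := by
    have h1 := tsum_sq_fourierCoeff (ContinuousMap.toLp (E := ℂ) 2 haarAddCircle ℂ ΔC)
    have h2 : ∀ n : ℤ, fourierCoeff (⇑(ContinuousMap.toLp (E := ℂ) 2 haarAddCircle ℂ ΔC)) n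
        = fourierCoeff hΔper.lift n := fun n => fourierCoeff_toLp ΔC n
    simp_rw [h2] at h1
    rw [h1]
    have h3 : ∫ t : AddCircle (2*π),
        ‖(ContinuousMap.toLp (E := ℂ) 2 haarAddCircle ℂ ΔC) t‖^2 ∂haarAddCircle
        = ∫ t, ‖ΔC t‖^2 ∂haarAddCircle := by
      apply MeasureTheory.integral_congr_ae
      filter_upwards [ContinuousMap.coeFn_toLp (p := 2) (μ := haarAddCircle) (𝕜 := ℂ) ΔC] with t ht
      rw [ht]
    rw [h3, integral_haar_eq (fun t => ‖ΔC t‖^2)]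
    rfl
  -- Parseval for g'
  have hmem := memℒp_lift hper' hL2
  set G'L := hmem.toLp hper'.lift with hG'L
  have h2 : ∀ n : ℤ, fourierCoeff (⇑G'L) n = fourierCoeff hper'.lift n := by
    intro n
    simp only [fourierCoeff]
    apply MeasureTheory.integral_congr_ae
    filter_upwards [hmem.coeFn_toLp] with t ht
    rw [ht]
  have hparg' : ∑' n : ℤ, ‖fourierCoeff hper'.lift n‖^2
      = (1/(2*π)) * ∫ x in (-π)..π, ‖g' x‖^2 := by
    have h1 := tsum_sq_fourierCoeff G'L
    simp_rw [h2] at h1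
    rw [h1]
    have h3 : ∫ t : AddCircle (2*π), ‖G'L t‖^2 ∂haarAddCircle
        = ∫ t, ‖hper'.lift t‖^2 ∂haarAddCircle := by
      apply MeasureTheory.integral_congr_ae
      filter_upwards [hmem.coeFn_toLp] with t ht
      rw [ht]
    rw [h3, integral_haar_eq (fun t => ‖hper'.lift t‖^2)]
    rfl
  have hs : Summable (fun n : ℤ => ‖fourierCoeff hper'.lift n‖^2) := by
    have h1 := lp.memℓp (fourierBasis.repr G'L)
    have h2' := h1.summable (by norm_num : 0 < (2:ℝ≥0∞).toReal)
    refine h2'.congr fun n => ?_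
    rw [fourierBasis_repr, h2 n, show ((2:ℝ≥0∞).toReal) = ((2:ℕ):ℝ) by norm_num,
      Real.rpow_natCast]
  have hsumLHS : Summable (fun n : ℤ => ‖fourierCoeff hΔper.lift n‖^2) :=
    Summable.of_nonneg_of_le (fun n => sq_nonneg _) hmode (hs.mul_left _)
  calc (1/(2*π)) * ∫ x in (-π)..π, ‖Δ x‖^2
      = ∑' n : ℤ, ‖fourierCoeff hΔper.lift n‖^2 := hparΔ.symm
    _ ≤ ∑' n : ℤ, 2*(1-Real.cos z) * ‖fourierCoeff hper'.lift n‖^2 :=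
        Summable.tsum_le_tsum hmode hsumLHS (hs.mul_left _)
    _ = 2*(1-Real.cos z) * ∑' n : ℤ, ‖fourierCoeff hper'.lift n‖^2 := tsum_mul_left
    _ = 2*(1-Real.cos z) * ((1/(2*π)) * ∫ x in (-π)..π, ‖g' x‖^2) := by rw [hparg']

lemma key_vector (d : ℕ) (γ γ' : ℝ → EuclideanSpace ℝ (Fin d))
    (hγcont : Continuous γ)
    (hper : Function.Periodic γ (2 * π))
    (hper' : Function.Periodic γ' (2 * π))
    (hInt : ∀ a b : ℝ, IntervalIntegrable γ' volume a b)
    (hFTC : ∀ a b : ℝ, γ b - γ a = ∫ x in a..b, γ' x)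
    (hL2 : MemLp γ' 2 (volume.restrict (Set.Ioc (-π) π)))
    {z : ℝ} (hz : 0 ≤ z) :
    (1 / (2 * π)) * ∫ x in (-π)..π, ‖γ (x + z) - γ x‖ ^ 2 ≤
      2 * (1 - Real.cos z) * ((1 / (2 * π)) * ∫ x in (-π)..π, ‖γ' x‖ ^ 2) := by
  have hππ : (-π:ℝ) ≤ π := by linarith [Real.pi_pos]
  set L : Fin d → (EuclideanSpace ℝ (Fin d) →L[ℝ] ℂ) :=
    fun i => Complex.ofRealCLM.comp (EuclideanSpace.proj i) with hL
  have hLapply : ∀ (i : Fin d) (v : EuclideanSpace ℝ (Fin d)), L i v = ((v i : ℝ) : ℂ) :=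
    fun i v => rfl
  have hnorm : ∀ v : EuclideanSpace ℝ (Fin d), ‖v‖^2 = ∑ i, ‖L i v‖^2 := by
    intro v
    rw [EuclideanSpace.norm_eq, Real.sq_sqrt (Finset.sum_nonneg fun i _ => sq_nonneg _)]
    apply Finset.sum_congr rfl
    intro i _
    rw [hLapply, Complex.norm_real]
  -- per-component hypotheses
  have hgcont : ∀ i : Fin d, Continuous (fun x => L i (γ x)) :=
    fun i => (L i).continuous.comp hγcont
  have hperg : ∀ i : Fin d, Function.Periodic (fun x => L i (γ x)) (2*π) := by
    intro i x; dsimp only; rw [hper x]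
  have hperg' : ∀ i : Fin d, Function.Periodic (fun x => L i (γ' x)) (2*π) := by
    intro i x; dsimp only; rw [hper' x]
  have hInt' : ∀ (i : Fin d) (a b : ℝ), IntervalIntegrable (fun x => L i (γ' x)) volume a b :=
    fun i a b => ⟨(L i).integrable_comp (hInt a b).1, (L i).integrable_comp (hInt a b).2⟩
  have hFTC' : ∀ (i : Fin d) (a b : ℝ),
      (fun x => L i (γ x)) b - (fun x => L i (γ x)) a = ∫ x in a..b, L i (γ' x) := by
    intro i a b
    calc L i (γ b) - L i (γ a) = L i (γ b - γ a) := (map_sub _ _ _).symm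
      _ = L i (∫ x in a..b, γ' x) := by rw [hFTC a b]
      _ = ∫ x in a..b, L i (γ' x) := ((L i).intervalIntegral_comp_comm (hInt a b)).symm
  have hL2' : ∀ i : Fin d, MemLp (fun x => L i (γ' x)) 2 (volume.restrict (Set.Ioc (-π) π)) :=
    fun i => (L i).comp_memLp' hL2
  -- componentwise inequality
  have hkey : ∀ i : Fin d,
      (1/(2*π)) * ∫ x in (-π)..π, ‖L i (γ (x+z)) - L i (γ x)‖^2
        ≤ 2*(1 - Real.cos z) * ((1/(2*π)) * ∫ x in (-π)..π, ‖L i (γ' x)‖^2) :=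
    fun i => key_complex (hgcont i) (hperg i) (hperg' i) (hInt' i) (hFTC' i) (hL2' i) hz
  -- split the integrals into components
  have hLHSeq : ∫ x in (-π)..π, ‖γ (x + z) - γ x‖^2
      = ∑ i, ∫ x in (-π)..π, ‖L i (γ (x+z)) - L i (γ x)‖^2 := by
    rw [← intervalIntegral.integral_finset_sum]
    · apply intervalIntegral.integral_congr
      intro x _
      dsimp only
      rw [hnorm (γ (x+z) - γ x)]
      apply Finset.sum_congr rfl
      intro i _
      rw [map_sub]
    · intro i _
      apply Continuous.intervalIntegrable
      exact ((((L i).continuous.comp (hγcont.comp (continuous_id.add continuous_const))).sub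
        ((L i).continuous.comp hγcont)).norm).pow 2
  have hRHSeq : ∫ x in (-π)..π, ‖γ' x‖^2 = ∑ i, ∫ x in (-π)..π, ‖L i (γ' x)‖^2 := by
    rw [← intervalIntegral.integral_finset_sum]
    · apply intervalIntegral.integral_congr
      intro x _
      dsimp only
      rw [hnorm (γ' x)]
    · intro i _
      have hm := hL2' i
      have hint2 : Integrable (fun x => ‖L i (γ' x)‖^2) (volume.restrict (Set.Ioc (-π) π)) :=
        (memLp_two_iff_integrable_sq_norm hm.aestronglyMeasurable).mp hm
      rw [intervalIntegrable_iff_integrableOn_Ioc_of_le hππ]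
      exact hint2
  rw [hLHSeq, hRHSeq]
  calc (1/(2*π)) * ∑ i, ∫ x in (-π)..π, ‖L i (γ (x+z)) - L i (γ x)‖^2
      = ∑ i, (1/(2*π)) * ∫ x in (-π)..π, ‖L i (γ (x+z)) - L i (γ x)‖^2 := by
        rw [Finset.mul_sum]
    _ ≤ ∑ i, 2*(1 - Real.cos z) * ((1/(2*π)) * ∫ x in (-π)..π, ‖L i (γ' x)‖^2) :=
        Finset.sum_le_sum fun i _ => hkey i
    _ = 2*(1 - Real.cos z) * ((1/(2*π)) * ∑ i, ∫ x in (-π)..π, ‖L i (γ' x)‖^2) := by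
        rw [Finset.mul_sum, Finset.mul_sum]

/-- For `γ ∈ H¹(𝕋¹; ℝ^d)` (encoded as: `γ` is `2π`-periodic, is the primitive of a
locally integrable, `2π`-periodic function `γ'` which is square-integrable on a period)
and any `z`, the Poincaré-type inequality
`(1/2π)∫|γ(x+z)-γ(x)|² dx ≤ 2(1-cos z)·(1/2π)∫|γ'(x)|² dx` holds. -/
theorem stmt2 (d : ℕ) (γ γ' : ℝ → EuclideanSpace ℝ (Fin d))
    (hper : Function.Periodic γ (2 * π))
    (hper' : Function.Periodic γ' (2 * π))
    (hInt : ∀ a b : ℝ, IntervalIntegrable γ' volume a b)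
    (hFTC : ∀ a b : ℝ, γ b - γ a = ∫ x in a..b, γ' x)
    (hL2 : MemLp γ' 2 (volume.restrict (Set.Ioc (-π) π)))
    (z : ℝ) :
    (1 / (2 * π)) * ∫ x in (-π)..π, ‖γ (x + z) - γ x‖ ^ 2 ≤
      2 * (1 - Real.cos z) * ((1 / (2 * π)) * ∫ x in (-π)..π, ‖γ' x‖ ^ 2) := by
  have hγcont : Continuous γ := by
    have hrep : ∀ x, γ x = γ 0 + ∫ t in (0:ℝ)..x, γ' t := by
      intro x
      rw [← hFTC 0 x]
      abel
    rw [show γ = fun x => γ 0 + ∫ t in (0:ℝ)..x, γ' t from funext hrep]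
    exact continuous_const.add (intervalIntegral.continuous_primitive hInt 0)
  rcases le_or_gt 0 z with hz | hz
  · exact key_vector d γ γ' hγcont hper hper' hInt hFTC hL2 hz
  · have hcos : Real.cos z = Real.cos (-z) := (Real.cos_neg z).symm
    have hLHS : ∫ x in (-π)..π, ‖γ (x + z) - γ x‖^2
        = ∫ x in (-π)..π, ‖γ (x + (-z)) - γ x‖^2 := by
      have h1 : ∀ x:ℝ, ‖γ (x + z) - γ x‖^2
          = (fun y => ‖γ (y + (-z)) - γ y‖^2) (x + z) := by
        intro x
        dsimp only
        rw [show x + z + -z = x by ring, norm_sub_rev]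
      rw [intervalIntegral.integral_congr
        (g := fun x => (fun y => ‖γ (y + (-z)) - γ y‖^2) (x+z)) (fun x _ => h1 x)]
      rw [intervalIntegral.integral_comp_add_right (fun y => ‖γ (y + (-z)) - γ y‖^2) z]
      have hper2 : Function.Periodic (fun y => ‖γ (y + (-z)) - γ y‖^2) (2*π) := by
        intro y
        dsimp only
        rw [show y + 2*π + -z = (y + -z) + 2*π by ring, hper (y + -z), hper y]
      have h := hper2.intervalIntegral_add_eq (-π+z) (-π)
      rw [show (-π+z)+(2*π) = π + z by ring, show (-π)+(2*π) = π by ring] at h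
      exact h
    rw [hLHS, hcos]
    exact key_vector d γ γ' hγcont hper hper' hInt hFTC hL2 (by linarith : (0:ℝ) ≤ -z)

end
end

section
/- Let τ: 𝕋¹ → ℝ³ be continuous with |τ(x)| ≡ 1, let v ∈ ℝ³ be a unit vector, and suppose x, y = x+π ∈ 𝕋¹ are antipodal points such that the induced curve γ_τ satisfies ⟨γ_τ(x), v⟩ = ⟨γ_τ(y), v⟩. Then |γ_τ(y) - γ_τ(x)| ≤ π·√(2λ) where λ := (1/2π)∫_{𝕋¹} (1 - ⟨v, τ(z)⟩²) dz. -/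
open MeasureTheory Real

/-- Let `τ : 𝕋¹ → ℝ³` be continuous with `|τ| ≡ 1`, `v` a unit vector, and suppose the
induced curve `γ` (with `γ' = τ`) satisfies `⟨γ(x),v⟩ = ⟨γ(x+π),v⟩` at the antipodal pair
`x, x+π`.  Then `|γ(x+π)-γ(x)| ≤ π√(2λ)` where `λ = (1/2π)∫(1-⟨v,τ(z)⟩²)dz`. -/
theorem stmt13 (τ γ : ℝ → EuclideanSpace ℝ (Fin 3))
    (v : EuclideanSpace ℝ (Fin 3)) (x : ℝ)
    (hcont : Continuous τ)
    (hper : Function.Periodic τ (2 * π))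
    (hunit : ∀ z, ‖τ z‖ = 1)
    (hFTC : ∀ a b : ℝ, γ b - γ a = ∫ z in a..b, τ z)
    (hv : ‖v‖ = 1)
    (heq : (inner ℝ (γ x) v : ℝ) = (inner ℝ (γ (x + π)) v : ℝ)) :
    ‖γ (x + π) - γ x‖ ≤
      π * Real.sqrt (2 * ((1 / (2 * π)) * ∫ z in (-π)..π, (1 - ((inner ℝ v (τ z) : ℝ)) ^ 2))) := by
  have hπ : (0:ℝ) < π := Real.pi_pos
  set g : ℝ → ℝ := fun z => 1 - ((inner ℝ v (τ z) : ℝ)) ^ 2 with hg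
  have hgcont : Continuous g := by
    apply Continuous.sub continuous_const
    exact ((continuous_const.inner hcont)).pow 2
  have hgnonneg : ∀ z, 0 ≤ g z := by
    intro z
    have h1 : |(inner ℝ v (τ z) : ℝ)| ≤ 1 := by
      have := abs_real_inner_le_norm v (τ z)
      rwa [hv, hunit, one_mul] at this
    have h2 := sq_abs ((inner ℝ v (τ z) : ℝ))
    have h3 := abs_nonneg ((inner ℝ v (τ z) : ℝ))
    simp only [hg]
    nlinarith
  have hgper : Function.Periodic g (2 * π) := fun z => by simp [hg, hper z]
  set I : ℝ := ∫ z in (-π)..π, g z with hI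
  have hInonneg : 0 ≤ I := by
    apply intervalIntegral.integral_nonneg (by linarith)
    intro u _; exact hgnonneg u
  -- The interval integral of g over any half period is ≤ I
  have hIhalf : (∫ z in x..(x + π), g z) ≤ I := by
    have h1 : (∫ z in x..(x + 2 * π), g z) = ∫ z in (-π)..(-π + 2 * π), g z :=
      hgper.intervalIntegral_add_eq x (-π)
    have hint : ∀ a b : ℝ, IntervalIntegrable g volume a b := fun a b =>
      hgcont.intervalIntegrable a b
    have h2 : (∫ z in x..(x + π), g z) + (∫ z in (x + π)..(x + 2 * π), g z)
        = ∫ z in x..(x + 2 * π), g z :=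
      intervalIntegral.integral_add_adjacent_intervals (hint _ _) (hint _ _)
    have h3 : 0 ≤ ∫ z in (x + π)..(x + 2 * π), g z := by
      apply intervalIntegral.integral_nonneg (by linarith)
      intro u _; exact hgnonneg u
    have h4 : (-π + 2 * π) = π := by ring
    rw [h4] at h1
    rw [hI]; linarith
  -- the projected integrand
  set f : ℝ → EuclideanSpace ℝ (Fin 3) :=
    fun z => τ z - (inner ℝ (τ z) v : ℝ) • v with hf
  have hfcont : Continuous f := by
    apply hcont.sub
    exact (hcont.inner (𝕜 := ℝ) continuous_const).smul continuous_const
  -- inner (γ(x+π) - γ x) v = 0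
  have hD : γ (x + π) - γ x = ∫ z in x..(x + π), f z := by
    have hτint : IntervalIntegrable τ volume x (x + π) := hcont.intervalIntegrable _ _
    have hhint : IntervalIntegrable (fun z => (inner ℝ (τ z) v : ℝ) • v) volume x (x + π) :=
      (((hcont.inner (𝕜 := ℝ) continuous_const).smul continuous_const).intervalIntegrable _ _)
    have hzero : (∫ z in x..(x + π), (inner ℝ (τ z) v : ℝ)) = 0 := by
      have h := (innerSL ℝ v).intervalIntegral_comp_comm hτint
      simp only [innerSL_apply_apply] at h
      have hin : (∫ z in x..(x + π), (inner ℝ (τ z) v : ℝ))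
          = (inner ℝ (∫ z in x..(x + π), τ z) v : ℝ) :=
        calc (∫ z in x..(x + π), (inner ℝ (τ z) v : ℝ))
            = ∫ z in x..(x + π), (inner ℝ v (τ z) : ℝ) :=
              intervalIntegral.integral_congr (fun z _ => real_inner_comm _ _)
          _ = (inner ℝ v (∫ z in x..(x + π), τ z) : ℝ) := h
          _ = (inner ℝ (∫ z in x..(x + π), τ z) v : ℝ) := real_inner_comm _ _
      rw [hin, ← hFTC x (x + π), inner_sub_left]
      linarith [heq]
    rw [intervalIntegral.integral_sub hτint hhint]
    rw [intervalIntegral.integral_smul_const, hzero, zero_smul, sub_zero]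
    exact hFTC x (x + π)
  -- pointwise norm of f
  have hfn : ∀ z, ‖f z‖ = Real.sqrt (g z) := by
    intro z
    have hsq : ‖f z‖ ^ 2 = g z := by
      have h1 : ‖f z‖ ^ 2 = ‖τ z‖ ^ 2 - 2 * (inner ℝ (τ z) ((inner ℝ (τ z) v : ℝ) • v) : ℝ)
          + ‖(inner ℝ (τ z) v : ℝ) • v‖ ^ 2 := by
        rw [hf]; exact norm_sub_sq_real _ _
      have h4 : ‖(inner ℝ (τ z) v : ℝ) • v‖ ^ 2 = (inner ℝ (τ z) v : ℝ) ^ 2 := by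
        rw [norm_smul, norm_eq_abs, hv, mul_one, sq_abs]
      have hc : (inner ℝ (τ z) v : ℝ) = (inner ℝ v (τ z) : ℝ) := real_inner_comm _ _
      rw [h1, hunit, real_inner_smul_right, h4, hc]
      simp only [hg]
      ring
    rw [← hsq, Real.sqrt_sq (norm_nonneg _)]
  -- norm bound
  have hnorm : ‖γ (x + π) - γ x‖ ≤ ∫ z in x..(x + π), Real.sqrt (g z) := by
    rw [hD]
    have := intervalIntegral.norm_integral_le_integral_norm (f := f) (μ := MeasureTheory.volume)
      (a := x) (b := x + π) (by linarith)
    simpa only [hfn] using this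
  -- Cauchy–Schwarz style bound via AM–GM, with epsilon
  have key : ∀ ε : ℝ, 0 < ε → ‖γ (x + π) - γ x‖ ≤ Real.sqrt (π * (I + ε)) := by
    intro ε hε
    set s : ℝ := Real.sqrt ((I + ε) / π) with hs
    have hspos : 0 < s := Real.sqrt_pos.2 (by positivity)
    have hs2 : s ^ 2 = (I + ε) / π := Real.sq_sqrt (by positivity)
    have hpt : ∀ z, Real.sqrt (g z) ≤ (g z / s + s) / 2 := by
      intro z
      have h0 : (Real.sqrt (g z) - s) ^ 2 ≥ 0 := sq_nonneg _
      have h1 : Real.sqrt (g z) ^ 2 = g z := Real.sq_sqrt (hgnonneg z)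
      have h2 : 0 ≤ Real.sqrt (g z) := Real.sqrt_nonneg _
      have key2 : 2 * s * Real.sqrt (g z) ≤ g z + s ^ 2 := by nlinarith
      have heq2 : (g z / s + s) / 2 = (g z + s ^ 2) / (2 * s) := by
        field_simp
      rw [heq2, le_div_iff₀ (by positivity)]
      nlinarith [key2]
    have hmono : (∫ z in x..(x + π), Real.sqrt (g z))
        ≤ ∫ z in x..(x + π), (g z / s + s) / 2 := by
      apply intervalIntegral.integral_mono_on (by linarith)
      · exact (hgcont.sqrt).intervalIntegrable _ _
      · exact (((hgcont.div_const s).add continuous_const).div_const 2).intervalIntegrable _ _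
      · intro u _; exact hpt u
    have hval : (∫ z in x..(x + π), (g z / s + s) / 2)
        = ((∫ z in x..(x + π), g z) / s + π * s) / 2 := by
      have h1 : (∫ z in x..(x + π), (g z / s + s) / 2)
          = (∫ z in x..(x + π), (g z / s + s)) / 2 := by
        rw [← intervalIntegral.integral_div]
      rw [h1, intervalIntegral.integral_add ((hgcont.div_const s).intervalIntegrable _ _)
        (intervalIntegrable_const), intervalIntegral.integral_div,
        intervalIntegral.integral_const]
      simp only [smul_eq_mul, add_sub_cancel_left]
      try ring
    have hbound : ((∫ z in x..(x + π), g z) / s + π * s) / 2 ≤ π * s := by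
      have hle : (∫ z in x..(x + π), g z) ≤ I + ε := by linarith
      have h1 : (∫ z in x..(x + π), g z) / s ≤ (I + ε) / s := by
        gcongr
      have hs2' : π * s ^ 2 = I + ε := by
        rw [hs2]; field_simp
      have h3 : (I + ε) / s = π * s := by
        field_simp
        nlinarith [hs2']
      linarith
    have hfin : π * s = Real.sqrt (π * (I + ε)) := by
      rw [hs, ← Real.sqrt_sq hπ.le, ← Real.sqrt_mul (by positivity)]
      congr 1
      field_simp
      linear_combination -(Real.sq_sqrt (sq_nonneg π))
    calc ‖γ (x + π) - γ x‖ ≤ ∫ z in x..(x + π), Real.sqrt (g z) := hnorm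
      _ ≤ ((∫ z in x..(x + π), g z) / s + π * s) / 2 := by rw [← hval]; exact hmono
      _ ≤ π * s := hbound
      _ = Real.sqrt (π * (I + ε)) := hfin
  -- pass to the limit ε → 0
  have hlim : ‖γ (x + π) - γ x‖ ≤ Real.sqrt (π * I) := by
    have hsq : ‖γ (x + π) - γ x‖ ^ 2 ≤ π * I := by
      by_contra h
      push_neg at h
      set ε : ℝ := (‖γ (x + π) - γ x‖ ^ 2 - π * I) / (2 * π) with hε
      have hεpos : 0 < ε := div_pos (by linarith) (by positivity)
      have hb := key ε hεpos
      have h2 : Real.sqrt (π * (I + ε)) ^ 2 = π * (I + ε) := Real.sq_sqrt (by positivity)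
      have h3 : ‖γ (x + π) - γ x‖ ^ 2 ≤ π * (I + ε) :=
        calc ‖γ (x + π) - γ x‖ ^ 2 ≤ Real.sqrt (π * (I + ε)) ^ 2 :=
              pow_le_pow_left₀ (norm_nonneg _) hb 2
          _ = π * (I + ε) := h2
      have h4 : π * ε = (‖γ (x + π) - γ x‖ ^ 2 - π * I) / 2 := by
        rw [hε]; field_simp
      have h5 : π * (I + ε) = π * I + π * ε := by ring
      rw [h5, h4] at h3
      linarith
    have := Real.sqrt_le_sqrt hsq
    rwa [Real.sqrt_sq (norm_nonneg _)] at this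
  -- identify the right-hand side
  have hrhs : π * Real.sqrt (2 * ((1 / (2 * π)) * I)) = Real.sqrt (π * I) := by
    rw [← Real.sqrt_sq hπ.le, ← Real.sqrt_mul (by positivity)]
    congr 1
    field_simp
    linear_combination -I * (Real.sq_sqrt (sq_nonneg π))
  rw [hrhs]
  exact hlim
end
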